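/- Fix H > 1 and q = arcoth(H). If real numbers r, s satisfy r² + s² + 2rs cosh q = 1/4 and 4rs sinh q = t with t ≠ 0, then r ≠ 0, s = t/(4 r sinh q), t ≤ T₁ := (tanh(q/2))/2, and r² = (1/8)(1 − 2Ht ± 2√(T₁ − t)√(T₂ − t)) where T₂ := 1/(2 tanh(q/2)); moreover T₁ < T₂. -/

import Mathlib

/-- For `H = coth q > 1`, if `r² + s² + 2rs cosh q = 1/4` and `4rs sinh q = t ≠ 0`, then
`r ≠ 0`, `s = t/(4r sinh q)`, `t ≤ T₁ = tanh(q/2)/2`, and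
`r² = (1 − 2Ht ± 2√(T₁−t)√(T₂−t))/8` with `T₂ = 1/(2 tanh(q/2))`; moreover `T₁ < T₂`. -/
theorem delaunay_parameters (q t r s H : ℝ) (hq : 0 < q)
    (hH : H = Real.cosh q / Real.sinh q)
    (h1 : r ^ 2 + s ^ 2 + 2 * r * s * Real.cosh q = 1 / 4)
    (h2 : 4 * r * s * Real.sinh q = t) (ht : t ≠ 0) :
    r ≠ 0 ∧ s = t / (4 * r * Real.sinh q) ∧
    t ≤ Real.tanh (q / 2) / 2 ∧
    (r ^ 2 = (1 - 2 * H * t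
        + 2 * Real.sqrt (Real.tanh (q / 2) / 2 - t)
            * Real.sqrt (1 / (2 * Real.tanh (q / 2)) - t)) / 8 ∨
     r ^ 2 = (1 - 2 * H * t
        - 2 * Real.sqrt (Real.tanh (q / 2) / 2 - t)
            * Real.sqrt (1 / (2 * Real.tanh (q / 2)) - t)) / 8) ∧
    Real.tanh (q / 2) / 2 < 1 / (2 * Real.tanh (q / 2)) := by
  have hsh : 0 < Real.sinh q := Real.sinh_pos_iff.mpr hq
  have ha : 0 < Real.sinh (q / 2) := Real.sinh_pos_iff.mpr (by linarith)
  have hb : 0 < Real.cosh (q / 2) := Real.cosh_pos _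
  set a := Real.sinh (q / 2) with hadef
  set b := Real.cosh (q / 2) with hbdef
  have hpy : b ^ 2 - a ^ 2 = 1 := Real.cosh_sq_sub_sinh_sq _
  have hq2 : q = 2 * (q / 2) := by ring
  have hsq : Real.sinh q = 2 * a * b := by rw [hq2, Real.sinh_two_mul]
  have hcq : Real.cosh q = a ^ 2 + b ^ 2 := by rw [hq2, Real.cosh_two_mul]; ring
  have htanh : Real.tanh (q / 2) = a / b := Real.tanh_eq_sinh_div_cosh _
  have hr : r ≠ 0 := by
    intro h; apply ht; rw [← h2, h]; ring
  have hs : s = t / (4 * r * Real.sinh q) := by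
    rw [eq_div_iff (by positivity)]; linear_combination h2
  rw [hsq] at h2
  rw [hcq] at h1
  have ht' : t = 8 * r * s * a * b := by linear_combination -h2
  have ha' : a ≠ 0 := ne_of_gt ha
  have hb' : b ≠ 0 := ne_of_gt hb
  have hkey2 : a - t * (b * 2) = 4 * a * (r - s) ^ 2 := by
    rw [ht']; linear_combination (-4 * a) * h1 + (-8 * a * r * s) * hpy
  have hT1 : t ≤ Real.tanh (q / 2) / 2 := by
    rw [htanh, div_div, le_div_iff₀ (by positivity)]
    nlinarith [mul_nonneg ha.le (sq_nonneg (r - s)), hkey2]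
  have hH2 : 2 * H * t = 8 * r * s * (a ^ 2 + b ^ 2) := by
    rw [hH, hcq, hsq, ht']; field_simp
  have hHt : 1 - 2 * H * t = 4 * (r ^ 2 + s ^ 2) := by
    linear_combination -hH2 - 4 * h1
  have hT1' : 0 ≤ Real.tanh (q / 2) / 2 - t := by linarith
  have key : (Real.tanh (q / 2) / 2 - t) * (1 / (2 * Real.tanh (q / 2)) - t)
      = (2 * (r ^ 2 - s ^ 2)) ^ 2 := by
    rw [htanh]
    have h4 : a / b / 2 - t = (a - 2 * b * t) / (2 * b) := by field_simp
    have h5 : 1 / (2 * (a / b)) - t = (b - 2 * a * t) / (2 * a) := by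
      field_simp
    rw [h4, h5, div_mul_div_comm, div_eq_iff (by positivity), ht']
    linear_combination (-16 * a * b * (r ^ 2 + s ^ 2 + 1 / 4 - 2 * r * s * (a ^ 2 + b ^ 2))) * h1
      + (-64 * a * b * r ^ 2 * s ^ 2 * (1 + b ^ 2 - a ^ 2)) * hpy
  refine ⟨hr, hs, hT1, ?_, ?_⟩
  · have hsqrt : Real.sqrt (Real.tanh (q / 2) / 2 - t)
        * Real.sqrt (1 / (2 * Real.tanh (q / 2)) - t) = |2 * (r ^ 2 - s ^ 2)| := by
      rw [← Real.sqrt_mul hT1', key, Real.sqrt_sq_eq_abs]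
    have hsqrt2 : 2 * (Real.sqrt (Real.tanh (q / 2) / 2 - t)
        * Real.sqrt (1 / (2 * Real.tanh (q / 2)) - t)) = 2 * |2 * (r ^ 2 - s ^ 2)| := by
      rw [hsqrt]
    rcases le_or_gt (s ^ 2) (r ^ 2) with h | h
    · left
      rw [show (2 : ℝ) * Real.sqrt (Real.tanh (q / 2) / 2 - t)
          * Real.sqrt (1 / (2 * Real.tanh (q / 2)) - t)
          = 2 * (Real.sqrt (Real.tanh (q / 2) / 2 - t)
          * Real.sqrt (1 / (2 * Real.tanh (q / 2)) - t)) from mul_assoc _ _ _,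
        hsqrt2, abs_of_nonneg (by linarith : (0:ℝ) ≤ 2 * (r ^ 2 - s ^ 2)), hHt]
      ring
    · right
      rw [show (2 : ℝ) * Real.sqrt (Real.tanh (q / 2) / 2 - t)
          * Real.sqrt (1 / (2 * Real.tanh (q / 2)) - t)
          = 2 * (Real.sqrt (Real.tanh (q / 2) / 2 - t)
          * Real.sqrt (1 / (2 * Real.tanh (q / 2)) - t)) from mul_assoc _ _ _,
        hsqrt2, abs_of_nonpos (by linarith : 2 * (r ^ 2 - s ^ 2) ≤ 0), hHt]
      ring
  · rw [htanh]
    have hab : a < b := by nlinarith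
    have h6 : 1 / (2 * (a / b)) = b / (2 * a) := by field_simp
    rw [h6, div_div, div_lt_div_iff₀ (by positivity) (by positivity)]
    nlinarith
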